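/- Row subsampling hrank monotonicity: with the same notation, for ε₂ < ε₁, E[hrank(Ã(ε₂))] ≥ (ε₂/ε₁)·E[hrank(Ã(ε₁))]. -/

import Mathlib

open Finset

/-- `hrank` of the row-submatrix of `A` with rows in `S`: the number of row indices
`j ∈ S` such that every vector in the left kernel of the submatrix has `j`-th
coordinate zero. -/
noncomputable def hrankSub {k m : ℕ} {F : Type*} [Field F]
    (A : Matrix (Fin k) (Fin m) F) (S : Finset (Fin k)) : ℕ :=
  Nat.card {j : Fin k // j ∈ S ∧
    ∀ (h : j ∈ S) (x : {i // i ∈ S} → F),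
      Matrix.vecMul x (A.submatrix (Subtype.val : {i // i ∈ S} → Fin k) id) = 0 →
        x ⟨j, h⟩ = 0}

section aux
open scoped Classical
variable {k m : ℕ} {F : Type*} [Field F]

def Pinned (A : Matrix (Fin k) (Fin m) F) (S : Finset (Fin k)) (j : Fin k) : Prop :=
  ∀ (h : j ∈ S) (x : {i // i ∈ S} → F),
      Matrix.vecMul x (A.submatrix (Subtype.val : {i // i ∈ S} → Fin k) id) = 0 →
        x ⟨j, h⟩ = 0

lemma hrank_eq_sum (A : Matrix (Fin k) (Fin m) F) (S : Finset (Fin k)) :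
    (hrankSub A S : ℝ) = ∑ j ∈ S, if Pinned A S j then (1:ℝ) else 0 := by
  have h1 : hrankSub A S = (S.filter (fun j => Pinned A S j)).card := by
    rw [hrankSub, Nat.card_eq_fintype_card, Fintype.card_subtype]
    congr 1
    ext j
    simp only [Finset.mem_filter]
    simp [Pinned]
  rw [h1, Finset.card_filter]
  push_cast
  rfl

lemma pinned_mono (A : Matrix (Fin k) (Fin m) F) {S T : Finset (Fin k)} {j : Fin k}
    (hTS : T ⊆ S) (hjT : j ∈ T) (hp : Pinned A S j) : Pinned A T j := by
  intro h x hx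
  set f : Fin k → F := fun i => if h : i ∈ T then x ⟨i, h⟩ else 0 with hf
  have key : Matrix.vecMul (fun i : {i // i ∈ S} => f i.1)
      (A.submatrix (Subtype.val : {i // i ∈ S} → Fin k) id) = 0 := by
    funext c
    have e1 : ∑ i : {i // i ∈ S}, f i.1 * A i.1 c = ∑ i ∈ S, f i * A i c := by
      rw [← Finset.sum_coe_sort S (fun i => f i * A i c)]
    have e2 : ∑ i ∈ S, f i * A i c = ∑ i ∈ T, f i * A i c := by
      refine (Finset.sum_subset hTS ?_).symm
      intro i _ hiT
      simp [hf, hiT]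
    have e3 : ∑ i ∈ T, f i * A i c = ∑ i : {i // i ∈ T}, x i * A i.1 c := by
      rw [← Finset.sum_coe_sort T (fun i => f i * A i c)]
      refine Finset.sum_congr rfl ?_
      intro i _
      simp [hf, i.2]
    have := congrFun hx c
    simpa [Matrix.vecMul, dotProduct, e1, e2, e3] using
      e1.trans (e2.trans (e3.trans (by simpa [Matrix.vecMul, dotProduct] using this)))
  have := hp (hTS hjT) (fun i : {i // i ∈ S} => f i.1) key
  simpa [hf, hjT] using this

/-- binomial identity over powersets -/
lemma sum_pow_powerset (s : Finset (Fin k)) (a b : ℝ) :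
    ∑ T ∈ s.powerset, a ^ T.card * b ^ (s.card - T.card) = (a + b) ^ s.card := by
  have := Finset.prod_add (fun _ : Fin k => a) (fun _ : Fin k => b) s
  simp only [Finset.prod_const] at this
  rw [this]
  refine Finset.sum_congr rfl ?_
  intro T hT
  rw [Finset.card_sdiff_of_subset (Finset.mem_powerset.mp hT)]

end aux

section aux2
open scoped Classical
variable {k m : ℕ} {F : Type*} [Field F]

lemma indicator_weight (S : Finset (Fin k)) {j : Fin k} (hj : j ∈ S) (p : ℝ) :
    ∑ T ∈ S.powerset, p ^ T.card * (1 - p) ^ (S.card - T.card) * (if j ∈ T then (1:ℝ) else 0)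
      = p := by
  have hS : S = insert j (S.erase j) := (Finset.insert_erase hj).symm
  have hje : j ∉ S.erase j := Finset.notMem_erase _ _
  rw [hS, Finset.sum_powerset_insert hje]
  have h0 : ∑ T ∈ (S.erase j).powerset,
      p ^ T.card * (1 - p) ^ ((insert j (S.erase j)).card - T.card) * (if j ∈ T then (1:ℝ) else 0)
      = 0 := by
    refine Finset.sum_eq_zero fun T hT => ?_
    have : j ∉ T := fun h => hje (Finset.mem_powerset.mp hT h)
    simp [this]
  rw [h0, zero_add]
  have hcard : (insert j (S.erase j)).card = (S.erase j).card + 1 :=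
    Finset.card_insert_of_notMem hje
  have : ∑ T ∈ (S.erase j).powerset,
      p ^ (insert j T).card * (1 - p) ^ ((insert j (S.erase j)).card - (insert j T).card)
        * (if j ∈ insert j T then (1:ℝ) else 0)
      = p * ∑ T ∈ (S.erase j).powerset, p ^ T.card * (1 - p) ^ ((S.erase j).card - T.card) := by
    rw [Finset.mul_sum]
    refine Finset.sum_congr rfl fun T hT => ?_
    have hjT : j ∉ T := fun h => hje (Finset.mem_powerset.mp hT h)
    have hTc : (insert j T).card = T.card + 1 := Finset.card_insert_of_notMem hjT
    have hle : T.card ≤ (S.erase j).card := Finset.card_le_card (Finset.mem_powerset.mp hT)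
    rw [hTc, hcard]
    have : (S.erase j).card + 1 - (T.card + 1) = (S.erase j).card - T.card := by omega
    rw [this]
    simp [pow_succ]
    ring
  rw [this, sum_pow_powerset]
  simp

lemma pointwise_bound (A : Matrix (Fin k) (Fin m) F) (S : Finset (Fin k)) {p : ℝ}
    (hp0 : 0 ≤ p) (hp1 : p ≤ 1) :
    p * (hrankSub A S : ℝ) ≤
      ∑ T ∈ S.powerset, p ^ T.card * (1 - p) ^ (S.card - T.card) * (hrankSub A T : ℝ) := by
  have hw : ∀ T ∈ S.powerset, (0:ℝ) ≤ p ^ T.card * (1 - p) ^ (S.card - T.card) := by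
    intro T _
    have : (0:ℝ) ≤ 1 - p := by linarith
    exact mul_nonneg (pow_nonneg hp0 _) (pow_nonneg this _)
  -- step 1: bound hrank T from below by pinned-in-S indicators
  have step1 : ∀ T ∈ S.powerset,
      (∑ j ∈ S, (if j ∈ T then (1:ℝ) else 0) * (if Pinned A S j then (1:ℝ) else 0))
        ≤ (hrankSub A T : ℝ) := by
    intro T hT
    have hTS := Finset.mem_powerset.mp hT
    rw [hrank_eq_sum]
    have e : ∑ j ∈ S, (if j ∈ T then (1:ℝ) else 0) * (if Pinned A S j then (1:ℝ) else 0)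
        = ∑ j ∈ T, (if Pinned A S j then (1:ℝ) else 0) := by
      rw [← Finset.sum_subset hTS (fun j _ hjT => by simp [hjT])]
      exact Finset.sum_congr rfl fun j hj => by simp [hj]
    rw [e]
    refine Finset.sum_le_sum fun j hj => ?_
    by_cases hP : Pinned A S j
    · simp [hP, pinned_mono A hTS hj hP]
    · simp only [hP, if_false, mul_zero]
      split <;> norm_num
  calc p * (hrankSub A S : ℝ)
      = ∑ j ∈ S, (if Pinned A S j then (1:ℝ) else 0) * p := by
        rw [← Finset.sum_mul, ← hrank_eq_sum]; ring
    _ = ∑ j ∈ S, (if Pinned A S j then (1:ℝ) else 0) *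
          ∑ T ∈ S.powerset, p ^ T.card * (1 - p) ^ (S.card - T.card)
            * (if j ∈ T then (1:ℝ) else 0) := by
        refine Finset.sum_congr rfl fun j hj => ?_
        rw [indicator_weight S hj]
    _ = ∑ T ∈ S.powerset, p ^ T.card * (1 - p) ^ (S.card - T.card) *
          ∑ j ∈ S, (if j ∈ T then (1:ℝ) else 0) * (if Pinned A S j then (1:ℝ) else 0) := by
        simp_rw [Finset.mul_sum]
        rw [Finset.sum_comm]
        refine Finset.sum_congr rfl fun T _ => Finset.sum_congr rfl fun j _ => by ring
    _ ≤ ∑ T ∈ S.powerset, p ^ T.card * (1 - p) ^ (S.card - T.card) * (hrankSub A T : ℝ) := by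
        refine Finset.sum_le_sum fun T hT => ?_
        exact mul_le_mul_of_nonneg_left (step1 T hT) (hw T hT)

end aux2

/-- Expectation over the random row-subset keeping each of the `k` rows independently
with probability `ε`. -/
noncomputable def rowExp (k : ℕ) (ε : ℝ) (f : Finset (Fin k) → ℝ) : ℝ :=
  ∑ S : Finset (Fin k), ε ^ S.card * (1 - ε) ^ (k - S.card) * f S

lemma rowExp_comp (k : ℕ) (f : Finset (Fin k) → ℝ) (ε₁ p : ℝ) :
    (∑ S : Finset (Fin k), ε₁ ^ S.card * (1 - ε₁) ^ (k - S.card) *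
      ∑ T ∈ S.powerset, p ^ T.card * (1 - p) ^ (S.card - T.card) * f T)
    = rowExp k (ε₁ * p) f := by
  classical
  have e1 : (∑ S : Finset (Fin k), ε₁ ^ S.card * (1 - ε₁) ^ (k - S.card) *
      ∑ T ∈ S.powerset, p ^ T.card * (1 - p) ^ (S.card - T.card) * f T)
      = ∑ S : Finset (Fin k), ∑ T : Finset (Fin k), if T ∈ S.powerset then
          ε₁ ^ S.card * (1 - ε₁) ^ (k - S.card) *
            (p ^ T.card * (1 - p) ^ (S.card - T.card) * f T) else 0 := by
    refine Finset.sum_congr rfl fun S _ => ?_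
    rw [Finset.mul_sum, Finset.sum_ite_mem, Finset.univ_inter]
  rw [e1, Finset.sum_comm]
  have e2 : ∀ T : Finset (Fin k),
      (∑ S : Finset (Fin k), if T ∈ S.powerset then
          ε₁ ^ S.card * (1 - ε₁) ^ (k - S.card) *
            (p ^ T.card * (1 - p) ^ (S.card - T.card) * f T) else 0)
      = (ε₁ * p) ^ T.card * (1 - (ε₁ * p)) ^ (k - T.card) * f T := by
    intro T
    rw [← Finset.sum_filter]
    have hTc : Tᶜ.card = k - T.card := by
      rw [Finset.card_compl]; simp
    have e3 : ∑ S ∈ Finset.univ.filter (fun S : Finset (Fin k) => T ∈ S.powerset),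
        ε₁ ^ S.card * (1 - ε₁) ^ (k - S.card) *
          (p ^ T.card * (1 - p) ^ (S.card - T.card) * f T)
        = ∑ U ∈ Tᶜ.powerset, (ε₁ * p) ^ T.card * f T *
            ((ε₁ * (1 - p)) ^ U.card * (1 - ε₁) ^ (Tᶜ.card - U.card)) := by
      refine Finset.sum_nbij' (fun S => S \ T) (fun U => T ∪ U) ?_ ?_ ?_ ?_ ?_
      · intro S hS
        simp only [Finset.mem_filter, Finset.mem_powerset] at hS ⊢
        intro x hx
        simp [Finset.mem_compl, (Finset.mem_sdiff.mp hx).2]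
      · intro U hU
        simp only [Finset.mem_filter, Finset.mem_powerset, Finset.mem_univ, true_and]
        exact Finset.subset_union_left
      · intro S hS
        simp only [Finset.mem_filter, Finset.mem_powerset, Finset.mem_univ, true_and] at hS
        exact Finset.union_sdiff_of_subset hS
      · intro U hU
        have hU' : U ⊆ Tᶜ := Finset.mem_powerset.mp hU
        have hd : Disjoint T U := by
          rw [Finset.disjoint_right]
          intro a haU haT
          exact (Finset.mem_compl.mp (hU' haU)) haT
        exact Finset.union_sdiff_cancel_left hd
      · intro S hS
        simp only [Finset.mem_filter, Finset.mem_powerset, Finset.mem_univ, true_and] at hS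
        have hcard : S.card = T.card + (S \ T).card := by
          rw [Finset.card_sdiff_of_subset hS]
          have := Finset.card_le_card hS
          omega
        have hk : S.card ≤ k := by
          simpa using Finset.card_le_univ S
        have h1 : k - S.card = Tᶜ.card - (S \ T).card := by omega
        have h2 : S.card - T.card = (S \ T).card := by omega
        beta_reduce
        rw [h1, h2, hcard, pow_add, mul_pow, mul_pow]
        ring
    rw [e3, ← Finset.mul_sum, sum_pow_powerset, hTc]
    have : ε₁ * (1 - p) + (1 - ε₁) = 1 - ε₁ * p := by ring
    rw [this]
    ring
  rw [Finset.sum_congr rfl fun T _ => e2 T]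
  rfl

/-- Row subsampling hrank monotonicity: for `0 < ε₂ < ε₁ ≤ 1`,
`E[hrank(Ã(ε₂))] ≥ (ε₂/ε₁)·E[hrank(Ã(ε₁))]`. -/
theorem row_subsampling_hrank_monotone {k m : ℕ} {F : Type*} [Field F]
    (A : Matrix (Fin k) (Fin m) F) (ε₁ ε₂ : ℝ)
    (h2 : 0 < ε₂) (h21 : ε₂ < ε₁) (h1 : ε₁ ≤ 1) :
    rowExp k ε₂ (fun S => (hrankSub A S : ℝ))
      ≥ (ε₂ / ε₁) * rowExp k ε₁ (fun S => (hrankSub A S : ℝ)) := by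
  have hε₁ : 0 < ε₁ := h2.trans h21
  set p : ℝ := ε₂ / ε₁ with hp
  have hp0 : 0 ≤ p := by positivity
  have hp1 : p ≤ 1 := by
    rw [hp, div_le_one hε₁]; linarith
  have hε₂ : ε₂ = ε₁ * p := by
    rw [hp]; field_simp
  rw [ge_iff_le, hε₂, ← rowExp_comp k _ ε₁ p]
  rw [rowExp, Finset.mul_sum]
  refine Finset.sum_le_sum fun S _ => ?_
  have hc : (0:ℝ) ≤ ε₁ ^ S.card * (1 - ε₁) ^ (k - S.card) := by
    have : (0:ℝ) ≤ 1 - ε₁ := by linarith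
    exact mul_nonneg (pow_nonneg hε₁.le _) (pow_nonneg this _)
  calc p * (ε₁ ^ S.card * (1 - ε₁) ^ (k - S.card) * (hrankSub A S : ℝ))
      = ε₁ ^ S.card * (1 - ε₁) ^ (k - S.card) * (p * (hrankSub A S : ℝ)) := by ring
    _ ≤ ε₁ ^ S.card * (1 - ε₁) ^ (k - S.card) *
        ∑ T ∈ S.powerset, p ^ T.card * (1 - p) ^ (S.card - T.card) * (hrankSub A T : ℝ) :=
        mul_le_mul_of_nonneg_left (pointwise_bound A S hp0 hp1) hc
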